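/- Let 1 ≤ k ≤ n, let p₁,…,p_k > 0 and d₁,…,dₙ be reals with dᵢ ≥ max(p₁,…,p_k) for all i, and let λ₁,…,λₙ ≥ 0 with D = Σλᵢdᵢ and Λ = Σλᵢ. Then the n-dimensional Lebesgue volume of the polytope 𝔖₀ = { u ∈ ℝⁿ : uᵢ ≥ 0, u₁+⋯+uₙ ≤ D, u₁/p₁+⋯+u_k/p_k ≤ Λ } equals p₁⋯p_k · Σ_{δ=0}^{n-k} (-1)^δ · D^{n-k-δ}/(n-k-δ)! · Λ^{k+δ}/(δ+k)! · h_δ(p₁,…,p_k). -/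

import Mathlib

open MeasureTheory Finset

def Spx (k : ℕ) (L : ℝ) : Set (Fin k → ℝ) := {v | (∀ i, 0 ≤ v i) ∧ ∑ i, v i ≤ L}

lemma isClosed_Spx (k : ℕ) (L : ℝ) : IsClosed (Spx k L) := by
  have h1 : IsClosed {v : Fin k → ℝ | ∀ i, 0 ≤ v i} := by
    have : {v : Fin k → ℝ | ∀ i, 0 ≤ v i} = ⋂ i, {v | 0 ≤ v i} := by ext v; simp [Set.mem_iInter]
    rw [this]
    exact isClosed_iInter fun i => isClosed_le continuous_const (continuous_apply i)
  have h2 : IsClosed {v : Fin k → ℝ | ∑ i, v i ≤ L} :=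
    isClosed_le (by continuity) continuous_const
  exact h1.inter h2

lemma measurableSet_Spx (k : ℕ) (L : ℝ) : MeasurableSet (Spx k L) :=
  (isClosed_Spx k L).measurableSet

lemma Spx_subset_Icc (k : ℕ) (L : ℝ) : Spx k L ⊆ Set.Icc 0 (fun _ => L) := by
  rintro v ⟨h1, h2⟩
  refine ⟨fun i => h1 i, fun i => ?_⟩
  calc v i ≤ ∑ j, v j := Finset.single_le_sum (fun j _ => h1 j) (Finset.mem_univ i)
  _ ≤ L := h2

lemma isCompact_Spx (k : ℕ) (L : ℝ) : IsCompact (Spx k L) :=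
  isCompact_Icc.of_isClosed_subset (isClosed_Spx k L) (Spx_subset_Icc k L)

lemma volume_Spx_lt_top (k : ℕ) (L : ℝ) : volume (Spx k L) < ⊤ :=
  (isCompact_Spx k L).measure_lt_top

open intervalIntegral in
lemma beta_nat (L : ℝ) : ∀ (b a : ℕ),
    ∫ x in (0:ℝ)..L, x ^ a * (L - x) ^ b
      = (a.factorial * b.factorial / (a + b + 1).factorial) * L ^ (a + b + 1) := by
  intro b
  induction b with
  | zero =>
    intro a
    simp only [pow_zero, mul_one, integral_pow, Nat.factorial_zero, Nat.cast_one, Nat.add_zero]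
    rw [Nat.factorial_succ]
    push_cast
    rw [zero_pow (Nat.succ_ne_zero a)]
    have ha : (a:ℝ) + 1 ≠ 0 := by positivity
    field_simp
    ring
  | succ b ih =>
    intro a
    have hderiv : ∀ x ∈ Set.uIcc (0:ℝ) L,
        HasDerivAt (fun y => y ^ (a+1) * (L - y) ^ (b+1))
          (((a:ℝ)+1) * x ^ a * (L-x)^(b+1) - ((b:ℝ)+1) * (x^(a+1) * (L-x)^b)) x := by
      intro x _
      have h1 : HasDerivAt (fun y : ℝ => y ^ (a+1)) (((a:ℝ)+1) * x ^ a) x := by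
        simpa using hasDerivAt_pow (a+1) x
      have h2 : HasDerivAt (fun y : ℝ => (L - y) ^ (b+1)) (-(((b:ℝ)+1) * (L-x)^b)) x := by
        have hsub : HasDerivAt (fun y : ℝ => L - y) (-1) x := by
          exact (hasDerivAt_id x).const_sub L
        have := (hasDerivAt_pow (b+1) (L - x)).comp x hsub
        refine this.congr_deriv ?_
        push_cast [Nat.add_sub_cancel]
        ring
      have := h1.mul h2
      refine this.congr_deriv ?_
      push_cast
      ring
    have h0 : ∫ x in (0:ℝ)..L,
        (((a:ℝ)+1) * x ^ a * (L-x)^(b+1) - ((b:ℝ)+1) * (x^(a+1) * (L-x)^b)) = 0 := by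
      rw [integral_eq_sub_of_hasDerivAt hderiv
        (Continuous.intervalIntegrable (by continuity) 0 L)]
      simp
    rw [integral_sub ((Continuous.intervalIntegrable (by continuity) 0 L))
      ((Continuous.intervalIntegrable (by continuity) 0 L)), sub_eq_zero] at h0
    have e1 : ∫ x in (0:ℝ)..L, ((a:ℝ)+1) * x ^ a * (L-x)^(b+1)
        = ((a:ℝ)+1) * ∫ x in (0:ℝ)..L, x ^ a * (L-x)^(b+1) := by
      rw [← intervalIntegral.integral_const_mul]; congr 1; ext x; ring
    have e2 : ∫ x in (0:ℝ)..L, ((b:ℝ)+1) * (x^(a+1) * (L-x)^b)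
        = ((b:ℝ)+1) * ∫ x in (0:ℝ)..L, x ^ (a+1) * (L-x)^b := integral_const_mul _ _
    rw [e1, e2, ih (a+1)] at h0
    have ha : (a:ℝ) + 1 ≠ 0 := by positivity
    have : ∫ x in (0:ℝ)..L, x ^ a * (L-x)^(b+1)
        = (((b:ℝ)+1) / ((a:ℝ)+1)) * ((↑(a+1).factorial * ↑b.factorial
            / ↑((a+1) + b + 1).factorial) * L ^ ((a+1) + b + 1)) := by
      field_simp at h0 ⊢
      linarith [h0]
    rw [this]
    have harr : (a+1) + b + 1 = a + (b+1) + 1 := by ring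
    rw [harr]
    rw [Nat.factorial_succ a, Nat.factorial_succ b]
    push_cast
    have hfac : (0:ℝ) < (a + (b+1) + 1).factorial := by positivity
    field_simp


lemma cons_mem_Spx_iff {k : ℕ} {L t : ℝ} {w : Fin k → ℝ} :
    Fin.cons t w ∈ Spx (k+1) L ↔ t ∈ Set.Icc (0:ℝ) L ∧ w ∈ Spx k (L - t) := by
  constructor
  · rintro ⟨h1, h2⟩
    have ht : 0 ≤ t := by simpa using h1 0
    have hw : ∀ i, 0 ≤ w i := fun i => by simpa using h1 i.succ
    rw [Fin.sum_univ_succ] at h2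
    simp only [Fin.cons_zero, Fin.cons_succ] at h2
    have hsw : 0 ≤ ∑ i, w i := Finset.sum_nonneg fun i _ => hw i
    exact ⟨⟨ht, by linarith⟩, ⟨hw, by linarith⟩⟩
  · rintro ⟨⟨ht0, htL⟩, hw, hsw⟩
    refine ⟨fun i => ?_, ?_⟩
    · induction i using Fin.cases with
      | zero => simpa using ht0
      | succ j => simpa using hw j
    · rw [Fin.sum_univ_succ]
      simp only [Fin.cons_zero, Fin.cons_succ]
      linarith

theorem dirichlet : ∀ (k : ℕ) (L : ℝ), 0 ≤ L → ∀ (α : Fin k → ℕ),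
    ∫ v in Spx k L, ∏ i, v i ^ α i
      = (∏ i, ((α i).factorial : ℝ)) * L ^ (k + ∑ i, α i) / (k + ∑ i, α i).factorial := by
  intro k
  induction k with
  | zero =>
    intro L hL α
    have : Spx 0 L = Set.univ := by
      ext v; simp [Spx, hL]
    rw [this]
    simp only [Finset.univ_eq_empty, Finset.prod_empty, Finset.sum_empty, Nat.add_zero,
      Nat.factorial_zero, pow_zero]
    rw [setIntegral_const]
    rw [measureReal_def, volume_pi, Measure.pi_univ]
    simp
  | succ k ih =>
    intro L hL α
    have hfc : Continuous (fun v : Fin (k+1) → ℝ => ∏ i, v i ^ α i) := by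
      apply continuous_finset_prod
      intro i _
      exact (continuous_apply i).pow _
    have hint : Integrable ((Spx (k+1) L).indicator (fun v => ∏ i, v i ^ α i)) := by
      rw [integrable_indicator_iff (measurableSet_Spx _ _)]
      exact hfc.continuousOn.integrableOn_compact (isCompact_Spx _ _)
    set G : ℝ × (Fin k → ℝ) → ℝ := fun z =>
      (Set.Icc (0:ℝ) L).indicator (fun t => t ^ α 0) z.1 *
        (Spx k (L - z.1)).indicator (fun w => ∏ i, w i ^ α (Fin.succ i)) z.2 with hG
    have hGeq : (fun z : ℝ × (Fin k → ℝ) =>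
        (Spx (k+1) L).indicator (fun v => ∏ i, v i ^ α i) (Fin.cons z.1 z.2)) = G := by
      funext z
      rw [hG]
      simp only [Set.indicator_apply]
      by_cases h1 : z.1 ∈ Set.Icc (0:ℝ) L <;> by_cases h2 : z.2 ∈ Spx k (L - z.1) <;>
        simp [cons_mem_Spx_iff, h1, h2, Fin.prod_univ_succ]
    have mp := (measurePreserving_piFinSuccAbove (fun _ : Fin (k+1) => (volume : Measure ℝ)) 0).symm
    have inner_eq : ∀ t : ℝ, (∫ w, G (t, w))
        = (Set.Icc (0:ℝ) L).indicator (fun s => s ^ α 0) t *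
          ∫ w in Spx k (L - t), ∏ i, w i ^ α (Fin.succ i) := by
      intro t
      rw [show (fun w => G (t, w)) = fun w =>
          (Set.Icc (0:ℝ) L).indicator (fun s => s ^ α 0) t *
            (Spx k (L - t)).indicator (fun w => ∏ i, w i ^ α (Fin.succ i)) w from rfl]
      rw [integral_const_mul, MeasureTheory.integral_indicator (measurableSet_Spx _ _)]
    have hpi : (Measure.pi fun _ : Fin k => (volume : Measure ℝ))
        = (volume : Measure (Fin k → ℝ)) := volume_pi.symm
    have hcomp : (fun z : ℝ × (Fin k → ℝ) =>
        (Spx (k+1) L).indicator (fun v => ∏ i, v i ^ α i) (Fin.cons z.1 z.2))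
        = ((Spx (k+1) L).indicator (fun v => ∏ i, v i ^ α i)) ∘
          (MeasurableEquiv.piFinSuccAbove (fun _ : Fin (k+1) => ℝ) 0).symm := by
      funext z
      simp [MeasurableEquiv.piFinSuccAbove_symm_apply, Fin.insertNthEquiv,
        Fin.insertNth_zero]
    have hGint : Integrable G ((volume : Measure ℝ).prod (volume : Measure (Fin k → ℝ))) := by
      rw [← hGeq, hcomp]
      rw [volume_pi] at hint
      have := (mp.integrable_comp_emb (MeasurableEquiv.measurableEmbedding _)).2 hint
      rwa [hpi] at this
    calc ∫ v in Spx (k+1) L, ∏ i, v i ^ α i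
        = ∫ v, (Spx (k+1) L).indicator (fun v => ∏ i, v i ^ α i) v :=
          (MeasureTheory.integral_indicator (measurableSet_Spx _ _)).symm
      _ = ∫ z : ℝ × (Fin k → ℝ),
            (Spx (k+1) L).indicator (fun v => ∏ i, v i ^ α i) (Fin.cons z.1 z.2) := by
          rw [volume_pi, ← mp.integral_comp', hcomp]
          rw [hpi, ← Measure.volume_eq_prod]
          rfl
      _ = ∫ t : ℝ, ∫ w : Fin k → ℝ, G (t, w) := by
          rw [hGeq, Measure.volume_eq_prod]
          exact integral_prod _ hGint
      _ = ∫ t : ℝ, (Set.Icc (0:ℝ) L).indicator (fun t => t ^ α 0 *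
            ((∏ i, ((α (Fin.succ i)).factorial : ℝ)) * (L - t) ^ (k + ∑ i, α (Fin.succ i))
              / (k + ∑ i, α (Fin.succ i)).factorial)) t := by
          congr 1
          funext t
          rw [inner_eq t]
          by_cases ht : t ∈ Set.Icc (0:ℝ) L
          · have hLt : 0 ≤ L - t := sub_nonneg.2 ht.2
            rw [Set.indicator_of_mem ht, Set.indicator_of_mem ht, ih (L - t) hLt]
          · rw [Set.indicator_of_notMem ht, Set.indicator_of_notMem ht, zero_mul]
      _ = (∏ i, ((α i).factorial : ℝ)) * L ^ ((k+1) + ∑ i, α i) / ((k+1) + ∑ i, α i).factorial := by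
          rw [MeasureTheory.integral_indicator measurableSet_Icc, integral_Icc_eq_integral_Ioc,
            ← intervalIntegral.integral_of_le hL]
          have : ∫ t in (0:ℝ)..L, t ^ α 0 *
              ((∏ i, ((α (Fin.succ i)).factorial : ℝ)) * (L - t) ^ (k + ∑ i, α (Fin.succ i))
                / (k + ∑ i, α (Fin.succ i)).factorial)
              = ((∏ i, ((α (Fin.succ i)).factorial : ℝ)) / (k + ∑ i, α (Fin.succ i)).factorial)
                * ∫ t in (0:ℝ)..L, t ^ α 0 * (L - t) ^ (k + ∑ i, α (Fin.succ i)) := by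
            rw [← intervalIntegral.integral_const_mul]
            congr 1; funext t; ring
          rw [this, beta_nat]
          rw [Fin.prod_univ_succ, Fin.sum_univ_succ]
          have harr : α 0 + (k + ∑ i, α (Fin.succ i)) + 1
              = (k+1) + (α 0 + ∑ i, α (Fin.succ i)) := by ring
          rw [harr]
          have h1 : (0:ℝ) < (k + ∑ i, α (Fin.succ i)).factorial := by positivity
          have h2 : (0:ℝ) < ((k+1) + (α 0 + ∑ i, α (Fin.succ i))).factorial := by positivity
          field_simp


lemma volume_Spx (m : ℕ) (t : ℝ) (ht : 0 ≤ t) :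
    volume (Spx m t) = ENNReal.ofReal (t ^ m / m.factorial) := by
  have h := dirichlet m t ht (fun _ => 0)
  simp only [pow_zero, Finset.prod_const_one, Nat.factorial_zero, Nat.cast_one, one_mul,
    Finset.sum_const_zero, Nat.add_zero] at h
  rw [setIntegral_const] at h
  simp only [smul_eq_mul, mul_one] at h
  rw [← h, measureReal_def, ENNReal.ofReal_toReal]
  exact ((isCompact_Spx m t).measure_lt_top).ne

lemma multiset_prod_map_eq_prod_pow {k : ℕ} (m : Multiset (Fin k)) (v : Fin k → ℝ) :
    (m.map v).prod = ∏ i : Fin k, v i ^ m.count i := by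
  rw [Finset.prod_multiset_map_count]
  apply Finset.prod_subset (Finset.subset_univ _)
  intro i _ hi
  rw [Multiset.count_eq_zero_of_notMem (by simpa using hi), pow_zero]

lemma sum_count_univ {k : ℕ} (m : Multiset (Fin k)) :
    ∑ i : Fin k, m.count i = Multiset.card m := by
  rw [← Multiset.toFinset_sum_count_eq m]
  symm
  apply Finset.sum_subset (Finset.subset_univ _)
  intro i _ hi
  exact Multiset.count_eq_zero_of_notMem (by simpa using hi)

lemma multinomial_mul_prod_factorial {k : ℕ} (m : Multiset (Fin k)) :
    (Multiset.countPerms m) * ∏ i : Fin k, (m.count i).factorial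
      = (Multiset.card m).factorial := by
  have hsupp : m.toFinsupp.support = m.toFinset := Multiset.toFinsupp_support m
  have hspec := Nat.multinomial_spec (s := m.toFinset) (f := m.count)
  have hprod : ∏ i : Fin k, (m.count i).factorial = ∏ i ∈ m.toFinset, (m.count i).factorial := by
    symm
    apply Finset.prod_subset (Finset.subset_univ _)
    intro i _ hi
    rw [Multiset.count_eq_zero_of_notMem (by simpa using hi)]
    rfl
  have hmult : Multiset.countPerms m = Nat.multinomial m.toFinset m.count := by
    rw [Multiset.countPerms, Finsupp.multinomial_eq, hsupp]
    congr 1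
  rw [hmult, hprod, mul_comm, hspec, Multiset.toFinset_sum_count_eq]

lemma integrableOn_Spx {k : ℕ} {L : ℝ} {f : (Fin k → ℝ) → ℝ} (hf : Continuous f) :
    IntegrableOn f (Spx k L) :=
  hf.continuousOn.integrableOn_compact (isCompact_Spx _ _)

lemma key (k N : ℕ) (L C : ℝ) (hL : 0 ≤ L) (p : Fin k → ℝ) :
    ∫ v in Spx k L, (C - ∑ j, p j * v j) ^ N
      = ∑ δ ∈ Finset.range (N+1), (-1:ℝ)^δ * C^(N-δ) * (N.factorial / (N-δ).factorial)
          * (L^(k+δ) / (k+δ).factorial)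
          * ∑ m ∈ (Finset.univ : Finset (Fin k)).sym δ, ((m : Multiset (Fin k)).map p).prod := by
  have hexp : ∀ v : Fin k → ℝ, (C - ∑ j, p j * v j) ^ N
      = ∑ δ ∈ Finset.range (N+1),
          (-1:ℝ)^δ * C^(N-δ) * (N.choose δ) * (∑ j, p j * v j) ^ δ := by
    intro v
    rw [sub_eq_add_neg, add_comm, add_pow]
    apply Finset.sum_congr rfl
    intro δ _
    rw [neg_pow]
    ring
  calc ∫ v in Spx k L, (C - ∑ j, p j * v j) ^ N
      = ∑ δ ∈ Finset.range (N+1), ∫ v in Spx k L,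
          (-1:ℝ)^δ * C^(N-δ) * (N.choose δ) * (∑ j, p j * v j) ^ δ := by
        rw [show (fun v : Fin k → ℝ => (C - ∑ j, p j * v j) ^ N)
            = fun v => ∑ δ ∈ Finset.range (N+1),
              (-1:ℝ)^δ * C^(N-δ) * (N.choose δ) * (∑ j, p j * v j) ^ δ from funext hexp]
        apply integral_finset_sum
        intro δ _
        apply integrableOn_Spx
        continuity
    _ = ∑ δ ∈ Finset.range (N+1), (-1:ℝ)^δ * C^(N-δ) * (N.factorial / (N-δ).factorial)
          * (L^(k+δ) / (k+δ).factorial)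
          * ∑ m ∈ (Finset.univ : Finset (Fin k)).sym δ, ((m : Multiset (Fin k)).map p).prod := by
        apply Finset.sum_congr rfl
        intro δ hδ
        have hδN : δ ≤ N := Nat.lt_succ_iff.1 (Finset.mem_range.1 hδ)
        rw [integral_const_mul]
        have hpow : ∀ v : Fin k → ℝ, (∑ j, p j * v j) ^ δ
            = ∑ m ∈ (Finset.univ : Finset (Fin k)).sym δ,
                (Multiset.countPerms (m : Multiset (Fin k)) : ℝ) *
                  (((m : Multiset (Fin k)).map p).prod * ∏ i, v i ^ (m : Multiset (Fin k)).count i) := by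
          intro v
          rw [Finset.sum_pow]
          apply Finset.sum_congr rfl
          intro m _
          simp only [Multiset.prod_map_mul, multiset_prod_map_eq_prod_pow]
          rfl

        rw [show (fun v : Fin k → ℝ => (∑ j, p j * v j) ^ δ) = fun v =>
            ∑ m ∈ (Finset.univ : Finset (Fin k)).sym δ,
              (Multiset.countPerms (m : Multiset (Fin k)) : ℝ) *
                (((m : Multiset (Fin k)).map p).prod * ∏ i, v i ^ (m : Multiset (Fin k)).count i)
          from funext hpow]
        rw [integral_finset_sum _ (fun m _ => by
          apply integrableOn_Spx
          have : Continuous fun v : Fin k → ℝ => ∏ i, v i ^ (m : Multiset (Fin k)).count i := by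
            apply continuous_finset_prod
            intro i _
            exact (continuous_apply i).pow _
          continuity)]
        have hterm : ∀ m ∈ (Finset.univ : Finset (Fin k)).sym δ,
            (∫ v in Spx k L, (Multiset.countPerms (m : Multiset (Fin k)) : ℝ) *
              (((m : Multiset (Fin k)).map p).prod * ∏ i, v i ^ (m : Multiset (Fin k)).count i))
            = ((m : Multiset (Fin k)).map p).prod * ((δ.factorial : ℝ) * L^(k+δ) / (k+δ).factorial) := by
          intro m _
          rw [integral_const_mul, integral_const_mul,
            dirichlet k L hL (fun i => (m : Multiset (Fin k)).count i)]
          have hcard : ∑ i, (m : Multiset (Fin k)).count i = δ := by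
            rw [sum_count_univ]; exact m.prop
          rw [hcard]
          have hmult : (Multiset.countPerms (m : Multiset (Fin k)) : ℝ)
              * ∏ i, (((m : Multiset (Fin k)).count i).factorial : ℝ) = (δ.factorial : ℝ) := by
            rw [← Nat.cast_prod, ← Nat.cast_mul, multinomial_mul_prod_factorial]
            norm_cast
            rw [show Multiset.card (m : Multiset (Fin k)) = δ from m.prop]
          rw [← hmult]
          ring
        rw [Finset.sum_congr rfl hterm, ← Finset.sum_mul]
        have hchoose : ((N.choose δ : ℝ)) * δ.factorial = N.factorial / (N-δ).factorial := by
          have h := Nat.choose_mul_factorial_mul_factorial hδN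
          have hne : ((N-δ).factorial : ℝ) ≠ 0 := by positivity
          field_simp
          exact_mod_cast h
        rw [← hchoose]
        ring



/-- The volume of 𝔖₀ = { u ∈ ℝⁿ : u ≥ 0, Σuᵢ ≤ D, Σ_{j≤k} uⱼ/pⱼ ≤ Λ } equals
p₁⋯p_k · Σ_{δ=0}^{n-k} (-1)^δ D^{n-k-δ}/(n-k-δ)! · Λ^{k+δ}/(δ+k)! · h_δ(p). -/
theorem stmt_8 (n k : ℕ) (hk1 : 1 ≤ k) (hkn : k ≤ n)
    (p : Fin k → ℝ) (hp : ∀ j, 0 < p j)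
    (d : Fin n → ℝ) (hd : ∀ i j, p j ≤ d i)
    (l : Fin n → ℝ) (hl : ∀ i, 0 ≤ l i) :
    volume {u : Fin n → ℝ | (∀ i, 0 ≤ u i) ∧ (∑ i, u i ≤ ∑ i, l i * d i) ∧
        ∑ j : Fin k, u (Fin.castLE hkn j) / p j ≤ ∑ i, l i}
      = ENNReal.ofReal ((∏ j, p j) *
          ∑ δ ∈ Finset.range (n - k + 1), (-1 : ℝ) ^ δ *
            ((∑ i, l i * d i) ^ (n - k - δ) / (n - k - δ).factorial) *
            ((∑ i, l i) ^ (k + δ) / (δ + k).factorial) *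
            ∑ m ∈ (Finset.univ : Finset (Fin k)).sym δ,
              ((m : Multiset (Fin k)).map p).prod) := by
  set D : ℝ := ∑ i, l i * d i with hD
  set Λ : ℝ := ∑ i, l i with hΛdef
  have hΛ : 0 ≤ Λ := Finset.sum_nonneg fun i _ => hl i
  have hDp : ∀ j, Λ * p j ≤ D := by
    intro j
    rw [hΛdef, hD, Finset.sum_mul]
    exact Finset.sum_le_sum fun i _ => mul_le_mul_of_nonneg_left (hd i j) (hl i)
  set m : ℕ := n - k with hm
  have hkm : k + m = n := Nat.add_sub_cancel' hkn
  -- the diagonal scaling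
  set c : Fin n → ℝ := fun i => if h : (i : ℕ) < k then p ⟨i, h⟩ else 1 with hc
  have hcpos : ∀ i, 0 < c i := by
    intro i; rw [hc]; dsimp only; split
    · exact hp _
    · exact one_pos
  set σ : (Fin k ⊕ Fin m) ≃ Fin n := finSumFinEquiv.trans (finCongr hkm) with hσ
  have hσl : ∀ j : Fin k, σ (Sum.inl j) = Fin.castLE hkn j := by
    intro j; apply Fin.ext; simp [hσ, finSumFinEquiv]
  have hσr : ∀ i : Fin m, ((σ (Sum.inr i) : Fin n) : ℕ) = k + i := by
    intro i; simp [hσ, finSumFinEquiv]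
  have hcl : ∀ j : Fin k, c (σ (Sum.inl j)) = p j := by
    intro j
    rw [hσl j, hc]
    dsimp only
    rw [dif_pos (by simpa using j.isLt)]
    exact congrArg p (Fin.ext rfl)
  have hcr : ∀ i : Fin m, c (σ (Sum.inr i)) = 1 := by
    intro i
    rw [hc]
    dsimp only
    rw [dif_neg (by rw [hσr i]; omega)]
  have hprodc : ∏ i, c i = ∏ j, p j := by
    rw [← Equiv.prod_comp σ c, Fintype.prod_sum_type]
    simp only [hcl, hcr]
    simp
  set Smid : Set (Fin n → ℝ) :=
    {v | (∀ i, 0 ≤ v i) ∧ (∑ i, c i * v i ≤ D) ∧ ∑ j : Fin k, v (Fin.castLE hkn j) ≤ Λ}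
    with hSmid
  have hSmidClosed : IsClosed Smid := by
    rw [hSmid]
    have h1 : IsClosed {v : Fin n → ℝ | ∀ i, 0 ≤ v i} := by
      have : {v : Fin n → ℝ | ∀ i, 0 ≤ v i} = ⋂ i, {v | 0 ≤ v i} := by ext v; simp
      rw [this]; exact isClosed_iInter fun i => isClosed_le continuous_const (continuous_apply i)
    have h2 : IsClosed {v : Fin n → ℝ | ∑ i, c i * v i ≤ D} :=
      isClosed_le (continuous_finset_sum _ fun i _ => continuous_const.mul (continuous_apply i))
        continuous_const
    have h3 : IsClosed {v : Fin n → ℝ | ∑ j : Fin k, v (Fin.castLE hkn j) ≤ Λ} :=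
      isClosed_le (continuous_finset_sum _ fun j _ => continuous_apply (Fin.castLE hkn j))
        continuous_const
    exact h1.inter (h2.inter h3)
  have hclc : ∀ j : Fin k, c (Fin.castLE hkn j) = p j := fun j => by rw [← hσl j]; exact hcl j
  set Lmap : (Fin n → ℝ) →ₗ[ℝ] (Fin n → ℝ) := Matrix.toLin' (Matrix.diagonal c) with hLmap
  have hLapp : ∀ v, Lmap v = fun i => c i * v i := by
    intro v; funext i
    rw [hLmap, Matrix.toLin'_apply]
    exact Matrix.mulVec_diagonal _ _ _
  have hdet : LinearMap.det Lmap = ∏ i, c i := by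
    rw [hLmap, LinearMap.det_toLin', Matrix.det_diagonal]
  have himg : Lmap '' Smid = {u : Fin n → ℝ | (∀ i, 0 ≤ u i) ∧ (∑ i, u i ≤ D) ∧
      ∑ j : Fin k, u (Fin.castLE hkn j) / p j ≤ Λ} := by
    ext u
    constructor
    · rintro ⟨v, ⟨hv0, hvD, hvΛ⟩, rfl⟩
      rw [hLapp]
      refine ⟨fun i => mul_nonneg (hcpos i).le (hv0 i), hvD, ?_⟩
      have : ∀ j : Fin k, c (Fin.castLE hkn j) * v (Fin.castLE hkn j) / p j
          = v (Fin.castLE hkn j) := by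
        intro j
        rw [hclc j, mul_div_cancel_left₀ _ (hp j).ne']
      simpa only [this] using hvΛ
    · rintro ⟨hu0, huD, huΛ⟩
      refine ⟨fun i => u i / c i, ⟨fun i => div_nonneg (hu0 i) (hcpos i).le, ?_, ?_⟩, ?_⟩
      · have : ∀ i, c i * (u i / c i) = u i := fun i => mul_div_cancel₀ _ (hcpos i).ne'
        simpa only [this] using huD
      · have : ∀ j : Fin k, u (Fin.castLE hkn j) / c (Fin.castLE hkn j)
            = u (Fin.castLE hkn j) / p j := fun j => by rw [hclc j]
        simpa only [this] using huΛ
      · rw [hLapp]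
        funext i
        exact mul_div_cancel₀ _ (hcpos i).ne'
  have hppos : (0:ℝ) < ∏ j, p j := Finset.prod_pos fun j _ => hp j
  have hvolS : volume {u : Fin n → ℝ | (∀ i, 0 ≤ u i) ∧ (∑ i, u i ≤ D) ∧
      ∑ j : Fin k, u (Fin.castLE hkn j) / p j ≤ Λ}
      = ENNReal.ofReal (∏ j, p j) * volume Smid := by
    rw [← himg, Measure.addHaar_image_linearMap, hdet, hprodc, abs_of_pos hppos]
  -- reindex to a product space
  set e1 := MeasurableEquiv.piCongrLeft (fun _ : Fin n => ℝ) σ with he1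
  have mp1 := volume_measurePreserving_piCongrLeft (fun _ : Fin n => ℝ) σ
  set e2s := (MeasurableEquiv.sumPiEquivProdPi (fun _ : Fin k ⊕ Fin m => ℝ)).symm with he2s
  have mp2 := volume_measurePreserving_sumPiEquivProdPi_symm (fun _ : Fin k ⊕ Fin m => ℝ)
  set P : Set ((Fin k → ℝ) × (Fin m → ℝ)) :=
    {z | z.1 ∈ Spx k Λ ∧ ((∀ i, 0 ≤ z.2 i) ∧ ∑ i, z.2 i ≤ D - ∑ j, p j * z.1 j)} with hP
  have hPclosed : IsClosed P := by
    rw [hP]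
    have h1 : IsClosed {z : (Fin k → ℝ) × (Fin m → ℝ) | ∀ j, 0 ≤ z.1 j} := by
      have : {z : (Fin k → ℝ) × (Fin m → ℝ) | ∀ j, 0 ≤ z.1 j} = ⋂ j, {z | 0 ≤ z.1 j} := by
        ext z; simp
      rw [this]
      exact isClosed_iInter fun j =>
        isClosed_le continuous_const ((continuous_apply j).comp continuous_fst)
    have h2 : IsClosed {z : (Fin k → ℝ) × (Fin m → ℝ) | ∑ j, z.1 j ≤ Λ} :=
      isClosed_le (continuous_finset_sum _ fun j _ =>
        (continuous_apply j).comp continuous_fst) continuous_const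
    have h3 : IsClosed {z : (Fin k → ℝ) × (Fin m → ℝ) | ∀ i, 0 ≤ z.2 i} := by
      have : {z : (Fin k → ℝ) × (Fin m → ℝ) | ∀ i, 0 ≤ z.2 i} = ⋂ i, {z | 0 ≤ z.2 i} := by
        ext z; simp
      rw [this]
      exact isClosed_iInter fun i =>
        isClosed_le continuous_const ((continuous_apply i).comp continuous_snd)
    have h4 : IsClosed {z : (Fin k → ℝ) × (Fin m → ℝ) |
        ∑ i, z.2 i ≤ D - ∑ j, p j * z.1 j} := by
      apply isClosed_le
      · exact continuous_finset_sum _ fun i _ => (continuous_apply i).comp continuous_snd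
      · exact continuous_const.sub (continuous_finset_sum _ fun j _ =>
          continuous_const.mul ((continuous_apply j).comp continuous_fst))
    have : P = ({z : (Fin k → ℝ) × (Fin m → ℝ) | ∀ j, 0 ≤ z.1 j} ∩ {z | ∑ j, z.1 j ≤ Λ}) ∩ ({z | ∀ i, 0 ≤ z.2 i} ∩ {z | ∑ i, z.2 i ≤ D - ∑ j, p j * z.1 j}) := by ext z; simp [hP, Spx, and_assoc]
    rw [hP] at this; rw [this]; exact (h1.inter h2).inter (h3.inter h4)
  have hPmeas : MeasurableSet P := hPclosed.measurableSet
  have hval : ∀ (z : (Fin k → ℝ) × (Fin m → ℝ)) (x : Fin k ⊕ Fin m),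
      (e1 (e2s z)) (σ x) = Sum.elim z.1 z.2 x := by
    intro z x
    rw [he1, he2s]
    rw [show (MeasurableEquiv.piCongrLeft (fun _ : Fin n => ℝ) σ)
        ((MeasurableEquiv.sumPiEquivProdPi (fun _ : Fin k ⊕ Fin m => ℝ)).symm z) (σ x)
        = (Equiv.piCongrLeft (fun _ : Fin n => ℝ) σ)
          ((Equiv.sumPiEquivProdPi (fun _ : Fin k ⊕ Fin m => ℝ)).symm z) (σ x) from rfl]
    rw [Equiv.piCongrLeft_apply_apply]
    cases x <;> rfl
  have hQ : e2s ⁻¹' (e1 ⁻¹' Smid) = P := by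
    ext z
    simp only [Set.mem_preimage, hSmid, hP, Set.mem_setOf_eq]
    have hu0 : (∀ i, 0 ≤ e1 (e2s z) i) ↔ ((∀ j, 0 ≤ z.1 j) ∧ (∀ i, 0 ≤ z.2 i)) := by
      constructor
      · intro h
        constructor
        · intro j
          have := h (σ (Sum.inl j)); rwa [hval z (Sum.inl j)] at this
        · intro i
          have := h (σ (Sum.inr i)); rwa [hval z (Sum.inr i)] at this
      · rintro ⟨h1, h2⟩ i
        have h2' := hval z (σ.symm i)
        rw [σ.apply_symm_apply] at h2'
        rw [h2']
        rcases hcase : σ.symm i with j | j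
        · exact h1 j
        · exact h2 j
    have husum : ∑ i, c i * e1 (e2s z) i = (∑ j, p j * z.1 j) + ∑ i, z.2 i := by
      rw [← Equiv.sum_comp σ (fun i => c i * e1 (e2s z) i), Fintype.sum_sum_type]
      congr 1
      · exact Finset.sum_congr rfl fun j _ => by
          rw [hval z (Sum.inl j), hcl j]; rfl
      · exact Finset.sum_congr rfl fun i _ => by
          rw [hval z (Sum.inr i), hcr i]; simp
    have hucast : ∑ j : Fin k, e1 (e2s z) (Fin.castLE hkn j) = ∑ j, z.1 j := by
      apply Finset.sum_congr rfl
      intro j _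
      rw [← hσl j, hval z (Sum.inl j)]
      rfl
    rw [hu0, husum, hucast]
    constructor
    · rintro ⟨⟨h1, h3⟩, hsum, hlin⟩
      have : 0 ≤ ∑ i, z.2 i := Finset.sum_nonneg fun i _ => h3 i
      exact ⟨⟨h1, hlin⟩, h3, by linarith⟩
    · rintro ⟨⟨h1, h2⟩, h3, h4⟩
      exact ⟨⟨h1, h3⟩, by linarith, h2⟩
  have hvolMid : volume Smid = volume P := by
    rw [← mp1.measure_preimage hSmidClosed.measurableSet.nullMeasurableSet,
      ← mp2.measure_preimage
        ((hSmidClosed.measurableSet.preimage e1.measurable).nullMeasurableSet), hQ]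
  have hf0 : ∀ v ∈ Spx k Λ, 0 ≤ D - ∑ j, p j * v j := by
    intro v hv
    have : Nonempty (Fin k) := ⟨⟨0, hk1⟩⟩
    obtain ⟨j0, _, hj0⟩ := Finset.exists_mem_eq_sup' (Finset.univ_nonempty) p
    have hM : ∀ j : Fin k, p j ≤ p j0 := fun j => hj0 ▸ Finset.le_sup' p (Finset.mem_univ j)
    have h1 : ∑ j, p j * v j ≤ ∑ j, p j0 * v j :=
      Finset.sum_le_sum fun j _ => mul_le_mul_of_nonneg_right (hM j) (hv.1 j)
    have h2 : ∑ j, p j0 * v j = p j0 * ∑ j, v j := by rw [Finset.mul_sum]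
    have h3 : p j0 * ∑ j, v j ≤ p j0 * Λ := mul_le_mul_of_nonneg_left hv.2 (hp j0).le
    have h4 := hDp j0
    rw [mul_comm] at h4
    linarith
  have hcont : Continuous (fun v : Fin k → ℝ => (D - ∑ j, p j * v j) ^ m / m.factorial) := by
    apply Continuous.div_const
    exact (continuous_const.sub (continuous_finset_sum _ fun j _ =>
      continuous_const.mul (continuous_apply j))).pow m
  have hvolP : volume P
      = ENNReal.ofReal (∫ v in Spx k Λ, (D - ∑ j, p j * v j) ^ m / m.factorial) := by
    rw [Measure.volume_eq_prod, Measure.prod_apply hPmeas]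
    have hsec : ∀ v : Fin k → ℝ, volume (Prod.mk v ⁻¹' P)
        = (Spx k Λ).indicator
            (fun v => ENNReal.ofReal ((D - ∑ j, p j * v j) ^ m / m.factorial)) v := by
      intro v
      by_cases hv : v ∈ Spx k Λ
      · have hpre : Prod.mk v ⁻¹' P = Spx m (D - ∑ j, p j * v j) := by
          ext w
          simp only [Set.mem_preimage, hP, Set.mem_setOf_eq]
          exact ⟨fun h => h.2, fun h => ⟨hv, h⟩⟩
        rw [hpre, volume_Spx _ _ (hf0 v hv), Set.indicator_of_mem hv]
      · have hpre : Prod.mk v ⁻¹' P = ∅ := by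
          ext w; simp [hP, hv]
        rw [hpre, Set.indicator_of_notMem hv]
        simp
    rw [lintegral_congr hsec, lintegral_indicator (measurableSet_Spx _ _)]
    rw [← ofReal_integral_eq_lintegral_ofReal (integrableOn_Spx hcont)
      (((ae_restrict_iff' (measurableSet_Spx _ _)).2 (Filter.Eventually.of_forall fun v hv =>
        div_nonneg (pow_nonneg (hf0 v hv) m) (Nat.cast_nonneg _))))]
  rw [hvolS, hvolMid, hvolP]
  rw [← ENNReal.ofReal_mul hppos.le]
  congr 1
  rw [show (fun v : Fin k → ℝ => (D - ∑ j, p j * v j) ^ m / m.factorial)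
      = fun v => (D - ∑ j, p j * v j) ^ m / m.factorial from rfl]
  rw [integral_div, key k m Λ D hΛ p, Finset.sum_div]
  congr 1
  apply Finset.sum_congr rfl
  intro δ _
  have hmf : ((m.factorial : ℝ)) ≠ 0 := by positivity
  have h1 : ((m - δ).factorial : ℝ) ≠ 0 := by positivity
  have h2 : (((k + δ).factorial : ℝ)) ≠ 0 := by positivity
  rw [show (δ + k).factorial = (k + δ).factorial by rw [Nat.add_comm]]
  field_simp
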